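/- Let X be a finite-dimensional real normed space, let A and C be nonempty compact subsets of X with A convex, let r > 0, suppose C ⊆ B_r(A), and suppose the distance from C to the topological boundary ∂B_r(A) equals γ > 0. Then for every δ with 0 ≤ δ ≤ min{r, γ} one has C ⊆ B_{r−δ}(A). -/

import Mathlib

open Metric Set

/-- The distance between two subsets of a metric space:
`|M N| = inf {dist m n : m ∈ M, n ∈ N}`. -/
noncomputable def setsDist {X : Type*} [PseudoMetricSpace X] (M N : Set X) : ℝ :=
  sInf ((fun p : X × X => dist p.1 p.2) '' (M ×ˢ N))

private lemma mem_cth_iff {X : Type*} [PseudoMetricSpace X] {s : Set X} (hs : s.Nonempty)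
    {δ : ℝ} (hδ : 0 ≤ δ) {x : X} : x ∈ cthickening δ s ↔ infDist x s ≤ δ := by
  rw [mem_cthickening_iff, infDist,
    ← ENNReal.le_ofReal_iff_toReal_le (Metric.infEdist_ne_top hs) hδ]

/-- Key ray inequality: if `a` is a nearest point of the convex set `A` to `c`,
then along the ray from `a` through `c`, the distance to `A` grows at least linearly. -/
private lemma ray_lower {X : Type*} [NormedAddCommGroup X] [NormedSpace ℝ X]
    {A : Set X} (hAne : A.Nonempty) (hAconv : Convex ℝ A) {c a : X} (ha : a ∈ A)
    (had : infDist c A = dist c a) {s : ℝ} (hs : 1 ≤ s) :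
    s * dist c a ≤ infDist (a + s • (c - a)) A := by
  have hs0 : 0 < s := lt_of_lt_of_le one_pos hs
  by_contra h
  push_neg at h
  rw [infDist_lt_iff hAne] at h
  obtain ⟨b, hb, hdab⟩ := h
  have hb' : s⁻¹ • b + (1 - s⁻¹) • a ∈ A := by
    refine hAconv hb ha (by positivity) (by simp; exact inv_le_one_of_one_le₀ hs) (by ring)
  have hle : infDist c A ≤ dist c (s⁻¹ • b + (1 - s⁻¹) • a) := infDist_le_dist_of_mem hb'
  have heq : c - (s⁻¹ • b + (1 - s⁻¹) • a) = s⁻¹ • (a + s • (c - a) - b) := by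
    rw [smul_sub, smul_add, smul_smul, inv_mul_cancel₀ hs0.ne', one_smul]
    module
  have : dist c (s⁻¹ • b + (1 - s⁻¹) • a) = s⁻¹ * dist (a + s • (c - a)) b := by
    rw [dist_eq_norm, heq, norm_smul, Real.norm_eq_abs, abs_of_pos (by positivity),
      ← dist_eq_norm]
  rw [this, had] at hle
  have h2 := mul_le_mul_of_nonneg_left hle hs0.le
  rw [← mul_assoc, mul_inv_cancel₀ hs0.ne', one_mul] at h2
  linarith

theorem stmt0 {X : Type*} [NormedAddCommGroup X] [NormedSpace ℝ X] [FiniteDimensional ℝ X]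
    (A C : Set X) (hAne : A.Nonempty) (hAcpt : IsCompact A) (hAconv : Convex ℝ A)
    (hCne : C.Nonempty) (hCcpt : IsCompact C)
    (r : ℝ) (hr : 0 < r)
    (hCB : C ⊆ cthickening r A)
    (γ : ℝ) (hγ : setsDist C (frontier (cthickening r A)) = γ) (hγpos : 0 < γ) :
    ∀ δ : ℝ, 0 ≤ δ → δ ≤ min r γ → C ⊆ cthickening (r - δ) A := by
  intro δ hδ0 hδmin c hc
  obtain ⟨hδr, hδγ⟩ : δ ≤ r ∧ δ ≤ γ := le_min_iff.1 hδmin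
  rw [mem_cth_iff hAne (by linarith)]
  by_contra h
  push_neg at h
  have hdr : infDist c A ≤ r := (mem_cth_iff hAne hr.le).1 (hCB hc)
  have hd0 : 0 < infDist c A := lt_of_le_of_lt (by linarith) h
  obtain ⟨a, ha, had⟩ := hAcpt.exists_infDist_eq_dist hAne c
  set d : ℝ := dist c a with hddef
  rw [had] at hdr hd0 h
  -- the point on the ray at distance exactly `r` from `A`
  have hca : ‖c - a‖ = d := by rw [hddef, dist_eq_norm]
  set t : ℝ := r / d with htdef
  have ht1 : 1 ≤ t := (one_le_div hd0).2 hdr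
  set x : X := a + t • (c - a) with hxdef
  have hxd : infDist x A = r := by
    refine le_antisymm ?_ ?_
    · have : dist x a = r := by
        simp only [hxdef, dist_eq_norm, add_sub_cancel_left, norm_smul, Real.norm_eq_abs,
          abs_of_pos (by positivity : (0:ℝ) < t)]
        rw [hca, htdef]
        field_simp
      exact this ▸ infDist_le_dist_of_mem ha
    · have := ray_lower hAne hAconv ha had ht1
      rwa [← hddef, htdef, div_mul_cancel₀ _ hd0.ne'] at this
  -- `x` lies on the frontier of the `r`-thickening
  have hxmem : x ∈ cthickening r A := (mem_cth_iff hAne hr.le).2 hxd.le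
  have hxfr : x ∈ frontier (cthickening r A) := by
    rw [frontier, (isClosed_cthickening).closure_eq]
    refine ⟨hxmem, fun hxint => ?_⟩
    obtain ⟨ε, hε, hball⟩ := Metric.mem_nhds_iff.1 (mem_interior_iff_mem_nhds.1 hxint)
    set t' : ℝ := t + ε / (2 * d) with ht'def
    have ht'1 : 1 ≤ t' := le_add_of_le_of_nonneg ht1 (by positivity)
    set y : X := a + t' • (c - a) with hydef
    have hyx : dist y x = ε / 2 := by
      simp only [hydef, hxdef, dist_eq_norm, ht'def]
      rw [show a + (t + ε / (2 * d)) • (c - a) - (a + t • (c - a))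
            = (ε / (2 * d)) • (c - a) by module]
      rw [norm_smul, Real.norm_eq_abs, abs_of_pos (by positivity), hca]
      field_simp
    have hymem : y ∈ cthickening r A := hball (by rw [mem_ball, hyx]; linarith)
    have hylow : t' * d ≤ infDist y A := ray_lower hAne hAconv ha had ht'1
    have : t' * d = r + ε / 2 := by
      rw [ht'def, htdef]
      field_simp
    have hyle : infDist y A ≤ r := (mem_cth_iff hAne hr.le).1 hymem
    rw [this] at hylow
    linarith
  -- conclude: the distance from `c` to the frontier is at most `r - d < δ ≤ γ`
  have hcx : dist c x = r - d := by
    simp only [hxdef, dist_eq_norm]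
    rw [show c - (a + t • (c - a)) = (1 - t) • (c - a) by module, norm_smul, Real.norm_eq_abs,
      abs_of_nonpos (by linarith), hca, htdef]
    field_simp
    ring
  have hsd : setsDist C (frontier (cthickening r A)) ≤ dist c x := by
    refine csInf_le ⟨0, fun z hz => ?_⟩ ⟨(c, x), ⟨hc, hxfr⟩, rfl⟩
    obtain ⟨p, -, rfl⟩ := hz
    exact dist_nonneg
  rw [hγ, hcx] at hsd
  linarith
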